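/- Let $L$ be the root lattice of type $A_{2l}$ with the symmetric bilinear form $\langle \alpha_i, \alpha_j \rangle$ given by the $A_{2l}$ Cartan matrix ($\langle \alpha_i, \alpha_i \rangle = 2$, $\langle \alpha_i, \alpha_j \rangle = -1$ if $|i-j|=1$, and $0$ otherwise), let $\nu(\alpha_i) = \alpha_{2l-i+1}$, and let $\zeta = \sqrt{-1} \in \mathbb{C}$. Define $C: L \times L \to \mathbb{C}^\times$ by $C(\alpha, \beta) = \prod_{j=0}^{3} (-\zeta^j)^{\langle \nu^j \alpha, \beta \rangle}$. Then $C(\alpha, \alpha) = 1$ for all $\alpha \in L$. -/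

import Mathlib

/-- Cartan matrix entry of type `A` (indices `1,…,2l`). -/
def cart (i j : ℕ) : ℤ :=
  if i = j then 2 else if i + 1 = j ∨ j + 1 = i then -1 else 0

/-- The simple root `α_i` as an integer coordinate vector. -/
def sroot (i : ℕ) : ℕ → ℤ := fun j => if j = i then 1 else 0

/-- The diagram involution `ν : α_i ↦ α_{2l-i+1}` on coordinate vectors. -/
def nuL (l : ℕ) (x : ℕ → ℤ) : ℕ → ℤ := fun j => x (2 * l + 1 - j)

/-- The symmetric bilinear form given by the `A_{2l}` Cartan matrix. -/
def Bform (l : ℕ) (x y : ℕ → ℤ) : ℤ :=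
  ∑ i ∈ Finset.Icc 1 (2 * l), ∑ j ∈ Finset.Icc 1 (2 * l), x i * cart i j * y j

/-- The root `α_i^{(j)} = α_i + ⋯ + α_{i+j-1}`. -/
def aroot (i j : ℕ) : ℕ → ℤ := fun m => ∑ k ∈ Finset.range j, sroot (i + k) m

/-- Membership in the root lattice `L = ⊕_{i=1}^{2l} ℤ α_i` (support condition). -/
def InL (l : ℕ) (x : ℕ → ℤ) : Prop := ∀ m, m ∉ Finset.Icc 1 (2 * l) → x m = 0

/-- The map `C(α,β) = ∏_{j=0}^{3} (-ζ^j)^{⟨ν^j α, β⟩}` with `ζ = i`. -/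
noncomputable def Cmap (l : ℕ) (a b : ℕ → ℤ) : ℂ :=
  ∏ j ∈ Finset.range 4, (-(Complex.I ^ j)) ^ (Bform l ((nuL l)^[j] a) b)

/-- The Cartan matrix is symmetric. -/
lemma cart_symm (i j : ℕ) : cart i j = cart j i := by
  unfold cart
  by_cases h : i = j <;> simp [h, eq_comm, or_comm]

/-- `⟨α, α⟩` is even. -/
lemma even_Bform_self (l : ℕ) (a : ℕ → ℤ) : Even (Bform l a a) := by
  rw [even_iff_two_dvd]
  have h2 := (ZMod.intCast_zmod_eq_zero_iff_dvd (Bform l a a) 2).mp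
  simp only [Nat.cast_ofNat] at h2
  apply h2
  unfold Bform
  push_cast
  rw [← Finset.sum_product']
  apply Finset.sum_involution (fun p _ => (p.2, p.1))
  · intro p hp
    rw [cart_symm p.2 p.1]
    ring_nf
    rw [show (2 : ZMod 2) = 0 from rfl, mul_zero]
  · intro p hp hne heq
    apply hne
    have h1 : p.1 = p.2 := by
      have := congrArg Prod.fst heq; simpa using this.symm
    rw [h1, show cart p.2 p.2 = 2 by simp [cart]]
    rw [show ((2 : ℤ) : ZMod 2) = 0 by decide, mul_zero, zero_mul]
  · intro p hp
    simp only [Finset.mem_product] at hp ⊢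
    exact ⟨hp.2, hp.1⟩
  · intro p hp; rfl

/-- `ν` is an involution on coordinates in range. -/
lemma nuL_nuL (l : ℕ) (x : ℕ → ℤ) (i : ℕ) (hi : i ≤ 2 * l + 1) :
    nuL l (nuL l x) i = x i := by
  unfold nuL
  congr 1
  omega

/-- `⟨ν²α, β⟩ = ⟨α, β⟩`. -/
lemma Bform_nuL_sq (l : ℕ) (x y : ℕ → ℤ) :
    Bform l (nuL l (nuL l x)) y = Bform l x y := by
  unfold Bform
  refine Finset.sum_congr rfl fun i hi => Finset.sum_congr rfl fun j hj => ?_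
  rw [nuL_nuL]
  simp only [Finset.mem_Icc] at hi
  omega

/-- `C(α,α) = 1` for all `α ∈ L`. -/
theorem Cmap_self (l : ℕ) (hl : 1 ≤ l) (a : ℕ → ℤ) (ha : InL l a) :
    Cmap l a a = 1 := by
  unfold Cmap
  rw [Finset.prod_range_succ, Finset.prod_range_succ, Finset.prod_range_succ,
    Finset.prod_range_one]
  have e2 : (nuL l)^[2] a = nuL l (nuL l a) := rfl
  have e3 : (nuL l)^[3] a = nuL l (nuL l (nuL l a)) := rfl
  rw [e2, e3, Bform_nuL_sq, Bform_nuL_sq]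
  simp only [Function.iterate_one, Function.iterate_zero, id_eq, pow_zero, pow_one]
  rw [show -(Complex.I ^ 2) = 1 by simp [Complex.I_sq],
    show -(Complex.I ^ 3) = Complex.I by rw [pow_succ, Complex.I_sq]; ring,
    one_zpow]
  obtain ⟨k, hk⟩ := even_Bform_self l a
  calc (-1 : ℂ) ^ Bform l a a * (-Complex.I) ^ Bform l (nuL l a) a * 1 *
        Complex.I ^ Bform l (nuL l a) a
      = ((-1 : ℂ) ^ Bform l a a) * ((-Complex.I) * Complex.I) ^ Bform l (nuL l a) a := by
        rw [mul_zpow]; ring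
    _ = 1 := by
        rw [show (-Complex.I) * Complex.I = 1 by
          rw [neg_mul, Complex.I_mul_I]; ring, one_zpow, mul_one, hk,
          ← two_mul, zpow_mul]
        norm_num
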